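/- Let d ≥ 2 be an integer and z₀ a complex number with Im z₀ ≠ 0. For 0 ≤ j < k ≤ d, define the real number D_{j,k}(z₀) as the real part of (−1)^{k−j−1} · (∏_{m=j}^{k−1}(z₀−m) · ∏_{m=j}^{k−1}(z̄₀+d−m) − ∏_{m=j}^{k−1}(z̄₀−m) · ∏_{m=j}^{k−1}(z₀+d−m)) / (d · (z₀ − z̄₀)), where z̄₀ is the complex conjugate of z₀. Suppose that for every triple of integers 0 ≤ i < j < k ≤ d, among the three real numbers (−1)^i · D_{j,k}(z₀), (−1)^{j+1} · D_{i,k}(z₀), (−1)^k · D_{i,j}(z₀), at least one is strictly positive and at least one is strictly negative. Then for every family of real numbers a_0, …, a_d with a_m ≥ 0 for all m and not all zero, Σ_{m=0}^d a_m · C_d(z₀+d−m) ≠ 0. -/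

import Mathlib

open ComplexConjugate

/-- The binomial coefficient polynomial `C_d(w) = (1/d!) ∏_{i=0}^{d-1} (w - i)`. -/
noncomputable def binomC (d : ℕ) (w : ℂ) : ℂ :=
  (∏ i ∈ Finset.range d, (w - i)) / (Nat.factorial d)

/-- The real number `D_{j,k}(z)` of Proposition 2.4 for the binomial coefficient
basis, given by its explicit formula. -/
noncomputable def Dval (d j k : ℕ) (z : ℂ) : ℝ :=
  ((-1) ^ (k - j - 1) *
      ((∏ m ∈ Finset.Icc j (k - 1), (z - m)) *
          (∏ m ∈ Finset.Icc j (k - 1), (conj z + d - m))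
        - (∏ m ∈ Finset.Icc j (k - 1), (conj z - m)) *
          (∏ m ∈ Finset.Icc j (k - 1), (z + d - m)))
      / (d * (z - conj z))).re

def crossR (p q : ℂ) : ℝ := p.re * q.im - p.im * q.re

lemma icc_eq_ico {j k : ℕ} (hjk : j < k) : Finset.Icc j (k-1) = Finset.Ico j k := by
  rw [← Finset.Ico_add_one_right_eq_Icc]; congr 1; omega

lemma e1 (d j k : ℕ) (hjk : j < k) (hkd : k ≤ d) (z : ℂ) :
    (∏ i ∈ Finset.range d, (z + (d:ℂ) - (j:ℂ) - (i:ℂ))) =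
      (∏ m ∈ Finset.Icc j (k-1), (z + (d:ℂ) - (m:ℂ))) *
      (∏ i ∈ Finset.range (d - (k - j)), (z + (d:ℂ) - (k:ℂ) - (i:ℂ))) := by
  rw [icc_eq_ico hjk, Finset.prod_Ico_eq_prod_range]
  have hs : d = (k - j) + (d - (k - j)) := by omega
  rw [show Finset.range d = Finset.range ((k-j) + (d - (k-j))) from by rw [← hs],
    Finset.prod_range_add]
  congr 1
  · exact Finset.prod_congr rfl (fun i _ => by push_cast; ring)
  · refine Finset.prod_congr rfl (fun i _ => ?_)
    have : ((k - j + i : ℕ) : ℂ) = (k:ℂ) - j + i := by push_cast [Nat.cast_sub hjk.le]; ring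
    rw [this]; ring

lemma e2 (d j k : ℕ) (hjk : j < k) (hkd : k ≤ d) (z : ℂ) :
    (∏ i ∈ Finset.range d, (z + (d:ℂ) - (k:ℂ) - (i:ℂ))) =
      (∏ i ∈ Finset.range (d - (k - j)), (z + (d:ℂ) - (k:ℂ) - (i:ℂ))) *
      (∏ m ∈ Finset.Icc j (k-1), (z - (m:ℂ))) := by
  rw [icc_eq_ico hjk, Finset.prod_Ico_eq_prod_range]
  have hs : d = (d - (k - j)) + (k - j) := by omega
  rw [show Finset.range d = Finset.range ((d - (k-j)) + (k-j)) from by rw [← hs],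
    Finset.prod_range_add]
  congr 1
  refine Finset.prod_congr rfl (fun i _ => ?_)
  have h1 : ((d - (k - j) + i : ℕ) : ℂ) = (d:ℂ) - k + j + i := by
    push_cast [Nat.cast_sub (show k - j ≤ d by omega), Nat.cast_sub hjk.le]; ring
  have h2 : ((j + i : ℕ) : ℂ) = (j:ℂ) + i := by push_cast; ring
  rw [h1, h2]; ring

lemma bridge (d j k : ℕ) (hd : 0 < d) (hjk : j < k) (hkd : k ≤ d) (z : ℂ) (hz : z.im ≠ 0) :
    ∃ q : ℝ, 0 < q ∧ Dval d j k z =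
      (-1 : ℝ) ^ (j + k + 1) * q * crossR (binomC d (z + d - j)) (binomC d (z + d - k)) / z.im := by
  set A : ℂ := ∏ m ∈ Finset.Icc j (k-1), (z + (d:ℂ) - (m:ℂ)) with hA
  set B : ℂ := ∏ m ∈ Finset.Icc j (k-1), (z - (m:ℂ)) with hB
  set O : ℂ := ∏ i ∈ Finset.range (d - (k - j)), (z + (d:ℂ) - (k:ℂ) - (i:ℂ)) with hOdef
  set cj : ℂ := binomC d (z + d - j) with hcj
  set ck : ℂ := binomC d (z + d - k) with hck
  have hfac : ((d.factorial : ℂ)) ≠ 0 := by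
    exact_mod_cast Nat.cast_ne_zero.mpr (Nat.factorial_ne_zero d)
  have hO : O ≠ 0 := by
    refine Finset.prod_ne_zero_iff.mpr (fun i _ => ?_)
    intro hcon
    apply hz
    have := congrArg Complex.im hcon
    simpa using this
  have hns : Complex.normSq O ≠ 0 := by simpa [Complex.normSq_eq_zero] using hO
  have hc1 : cj * (d.factorial : ℂ) = A * O := by
    rw [hcj, binomC, div_mul_cancel₀ _ hfac, ← e1 d j k hjk hkd z]
  have hc2 : ck * (d.factorial : ℂ) = O * B := by
    rw [hck, binomC, div_mul_cancel₀ _ hfac, ← e2 d j k hjk hkd z]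
  -- conjugated products
  have hA' : (∏ m ∈ Finset.Icc j (k-1), (conj z + (d:ℂ) - (m:ℂ))) = conj A := by
    rw [hA, map_prod]
    refine Finset.prod_congr rfl fun m _ => ?_
    simp
  have hB' : (∏ m ∈ Finset.Icc j (k-1), (conj z - (m:ℂ))) = conj B := by
    rw [hB, map_prod]
    refine Finset.prod_congr rfl fun m _ => ?_
    simp
  have hOc : ((Complex.normSq O : ℝ) : ℂ) = O * conj O := (Complex.mul_conj O).symm
  have h1 : conj cj * (d.factorial : ℂ) = conj A * conj O := by
    have := congrArg conj hc1
    simpa [map_mul] using this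
  have step1 : B * conj A * ((Complex.normSq O : ℝ) : ℂ)
      = (conj cj * ck) * ((d.factorial : ℂ))^2 := by
    linear_combination B * conj A * hOc - ck * (d.factorial : ℂ) * h1 - conj A * conj O * hc2
  have step2 : conj B * A * ((Complex.normSq O : ℝ) : ℂ)
      = (cj * conj ck) * ((d.factorial : ℂ))^2 := by
    have := congrArg conj step1
    simpa [map_mul, map_pow, Complex.conj_ofReal, mul_comm] using this
  have hX : ((crossR cj ck : ℝ) : ℂ) = (conj cj * ck).im := by
    simp [crossR, Complex.mul_im]; ring_nf
  have hη : conj cj * ck - cj * conj ck = 2 * ((crossR cj ck : ℝ) : ℂ) * Complex.I := by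
    have h := Complex.sub_conj (conj cj * ck)
    have hcc : conj (conj cj * ck) = cj * conj ck := by simp [map_mul, mul_comm]
    rw [hcc] at h
    rw [h, hX]
    push_cast
    ring
  refine ⟨(d.factorial : ℝ)^2 / (Complex.normSq O * d), div_pos (by positivity) (mul_pos (Complex.normSq_pos.mpr hO) (by exact_mod_cast hd)), ?_⟩
  have hnum : B * conj A - conj B * A
      = 2 * ((crossR cj ck : ℝ) : ℂ) * Complex.I * ((d.factorial : ℂ))^2 / ((Complex.normSq O : ℝ) : ℂ) := by
    rw [eq_div_iff (by exact_mod_cast hns)]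
    linear_combination step1 - step2 + ((d.factorial : ℂ))^2 * hη
  have hzc : z - conj z = ((2 * z.im : ℝ) : ℂ) * Complex.I := Complex.sub_conj z
  have hdc : ((d : ℝ) : ℂ) ≠ 0 := by exact_mod_cast Nat.cast_ne_zero.mpr hd.ne'
  have himc : ((z.im : ℝ) : ℂ) ≠ 0 := Complex.ofReal_ne_zero.mpr hz
  have key : ((-1:ℂ)) ^ (k - j - 1) * (B * conj A - conj B * A) / ((d:ℂ) * (z - conj z))
      = (((-1:ℝ)) ^ (k - j - 1) * ((d.factorial : ℝ)^2 / (Complex.normSq O * d))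
          * crossR cj ck / z.im : ℝ) := by
    rw [hnum, hzc]
    have : ((d:ℂ)) ≠ 0 := by exact_mod_cast hd.ne'
    push_cast
    field_simp [Complex.I_ne_zero]
  have hD : Dval d j k z = ((-1:ℝ)) ^ (k - j - 1) * ((d.factorial : ℝ)^2 / (Complex.normSq O * d))
      * crossR cj ck / z.im := by
    rw [Dval, hA', hB', ← hA, ← hB]
    rw [show ((-1:ℂ)) ^ (k - j - 1) * (B * conj A - conj B * A) / ((d:ℂ) * (z - conj z))
        = (((-1:ℝ)) ^ (k - j - 1) * ((d.factorial : ℝ)^2 / (Complex.normSq O * d))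
          * crossR cj ck / z.im : ℝ) from key]
    exact Complex.ofReal_re _
  rw [hD]
  have hpar : ((-1:ℝ)) ^ (k - j - 1) = ((-1:ℝ)) ^ (j + k + 1) := by
    have hh : j + k + 1 = (k - j - 1) + 2 * (j + 1) := by omega
    rw [hh, pow_add, pow_mul]
    norm_num
  rw [hpar]

lemma pos_cancel {q A : ℝ} (hq : 0 < q) (h0 : 0 < q * A) : 0 < A := by nlinarith

lemma neg_cancel {q A : ℝ} (hq : 0 < q) (h0 : q * A < 0) : A < 0 := by nlinarith

lemma both_signs {ya yb t : ℝ} (hab : 0 ≤ ya * yb) (hpa : 0 < ya * t) (hnb : yb * t < 0) :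
    False := by
  nlinarith [mul_pos hpa (neg_pos.mpr hnb), mul_nonneg hab (sq_nonneg t)]

lemma finish_case {ya yb qa qb t : ℝ} (hqa : 0 < qa) (hqb : 0 < qb) (hab : 0 ≤ ya * yb)
    (hp : 0 < qa * (ya * t)) (hn : qb * (yb * t) < 0) : False :=
  both_signs hab (pos_cancel hqa hp) (neg_cancel hqb hn)

lemma signs (u v w X1 X2 X3 : ℝ) (hu : 0 ≤ u) (hv : 0 ≤ v) (hw : 0 ≤ w) (hs : 0 < u + v + w)
    (R1 : v * X1 + w * X2 = 0) (R2 : u * X1 - w * X3 = 0) (R3 : u * X2 + v * X3 = 0) :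
    0 ≤ X1 * X3 ∧ X2 * X3 ≤ 0 ∧ X1 * X2 ≤ 0 := by
  refine ⟨?_, ?_, ?_⟩
  · rcases hu.eq_or_lt with hu0 | hu0
    · rcases hw.eq_or_lt with hw0 | hw0
      · have hv0 : 0 < v := by linarith
        have hX1 : X1 = 0 := by
          have hvx : v * X1 = 0 := by rw [← hw0] at R1; linarith
          exact (mul_eq_zero.mp hvx).resolve_left hv0.ne'
        simp [hX1]
      · have hX3 : X3 = 0 := by
          have h3 : w * X3 = 0 := by rw [← hu0] at R2; linarith
          exact (mul_eq_zero.mp h3).resolve_left hw0.ne'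
        simp [hX3]
    · have e : u * (X1 * X3) = w * (X3 * X3) := by linear_combination X3 * R2
      nlinarith [mul_nonneg hw (mul_self_nonneg X3)]
  · rcases hu.eq_or_lt with hu0 | hu0
    · have hX3 : X3 = 0 := by
        rcases hv.eq_or_lt with hv0 | hv0
        · have hw0 : 0 < w := by linarith
          have h3 : w * X3 = 0 := by rw [← hu0] at R2; linarith
          exact (mul_eq_zero.mp h3).resolve_left hw0.ne'
        · have h3 : v * X3 = 0 := by rw [← hu0] at R3; linarith
          exact (mul_eq_zero.mp h3).resolve_left hv0.ne'
      simp [hX3]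
    · have e : u * (X2 * X3) = -(v * (X3 * X3)) := by linear_combination X3 * R3
      nlinarith [mul_nonneg hv (mul_self_nonneg X3)]
  · rcases hw.eq_or_lt with hw0 | hw0
    · have hX1 : X1 = 0 := by
        rcases hv.eq_or_lt with hv0 | hv0
        · have hu0 : 0 < u := by linarith
          have h3 : u * X1 = 0 := by rw [← hw0] at R2; linarith
          exact (mul_eq_zero.mp h3).resolve_left hu0.ne'
        · have h3 : v * X1 = 0 := by rw [← hw0] at R1; linarith
          exact (mul_eq_zero.mp h3).resolve_left hv0.ne'
      simp [hX1]
    · have e : w * (X1 * X2) = -(v * (X1 * X1)) := by linear_combination X1 * R1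
      nlinarith [mul_nonneg hv (mul_self_nonneg X1)]

lemma cramer (u v w : ℂ) :
    ((crossR v w : ℝ) : ℂ) * u - ((crossR u w : ℝ) : ℂ) * v + ((crossR u v : ℝ) : ℂ) * w = 0 := by
  apply Complex.ext <;>
    simp [crossR, Complex.add_re, Complex.sub_re, Complex.add_im, Complex.sub_im,
      Complex.mul_re, Complex.mul_im] <;> ring

lemma collinear_dep {u v : ℂ} (hc : crossR u v = 0) (hu : u ≠ 0) :
    ∃ ρ : ℝ, (ρ : ℂ) * u - v = 0 := by
  have hns : Complex.normSq u ≠ 0 := by simpa [Complex.normSq_eq_zero] using hu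
  refine ⟨(conj u * v).re / Complex.normSq u, ?_⟩
  have him : (conj u * v).im = 0 := by
    rw [Complex.mul_im, Complex.conj_re, Complex.conj_im]
    simp only [crossR] at hc
    linarith
  have h1 : conj u * v = (((conj u * v).re : ℝ) : ℂ) := by
    apply Complex.ext
    · simp
    · simpa using him
  have h2 : ((Complex.normSq u : ℝ) : ℂ) * v = (((conj u * v).re : ℝ) : ℂ) * u := by
    calc ((Complex.normSq u : ℝ) : ℂ) * v = (u * conj u) * v := by rw [Complex.mul_conj]
      _ = u * (conj u * v) := by ring
      _ = u * (((conj u * v).re : ℝ) : ℂ) := by rw [← h1]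
      _ = (((conj u * v).re : ℝ) : ℂ) * u := by ring
  have hns' : ((Complex.normSq u : ℝ) : ℂ) ≠ 0 := by exact_mod_cast hns
  rw [sub_eq_zero]
  push_cast
  rw [div_mul_eq_mul_div, div_eq_iff hns']
  linear_combination -h2

lemma reduce {n : ℕ} (a μ : Fin n → ℝ) (ha : ∀ m, 0 ≤ a m)
    (hsupp : ∀ m, μ m ≠ 0 → a m ≠ 0) (m₁ : Fin n) (hm₁ : 0 < μ m₁) :
    ∃ t : ℝ, 0 ≤ t ∧ (∀ m, 0 ≤ a m - t * μ m) ∧ ∃ m₀, a m₀ ≠ 0 ∧ a m₀ - t * μ m₀ = 0 := by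
  classical
  set F : Finset (Fin n) := Finset.univ.filter (fun m => 0 < μ m) with hF
  have hm₁F : m₁ ∈ F := by simp [hF, hm₁]
  obtain ⟨m₀, hm₀F, hmin⟩ := F.exists_min_image (fun m => a m / μ m) ⟨m₁, hm₁F⟩
  have hμ₀ : 0 < μ m₀ := by simpa [hF] using hm₀F
  refine ⟨a m₀ / μ m₀, div_nonneg (ha m₀) hμ₀.le, ?_, m₀, hsupp m₀ hμ₀.ne', by
    field_simp; ring⟩
  intro m
  rcases le_or_gt (μ m) 0 with hμm | hμm
  · have : a m₀ / μ m₀ * μ m ≤ 0 :=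
      mul_nonpos_of_nonneg_of_nonpos (div_nonneg (ha m₀) hμ₀.le) hμm
    linarith [ha m]
  · have hmF : m ∈ F := by simp [hF, hμm]
    have := hmin m hmF
    rw [div_le_div_iff₀ hμ₀ hμm] at this
    have : a m₀ / μ m₀ * μ m ≤ a m := by
      rw [div_mul_eq_mul_div, div_le_iff₀ hμ₀]
      linarith
    linarith

lemma sort3 {α : Type*} [LinearOrder α] {p q r : α} (hpq : p ≠ q) (hpr : p ≠ r) (hqr : q ≠ r) :
    ∃ i j k : α, i < j ∧ j < k ∧ ∀ x : α, (x = p ∨ x = q ∨ x = r) ↔ (x = i ∨ x = j ∨ x = k) := by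
  obtain hpq' | hpq' := hpq.lt_or_gt
  · obtain hqr' | hqr' := hqr.lt_or_gt
    · exact ⟨p, q, r, hpq', hqr', fun x => Iff.rfl⟩
    · obtain hpr' | hpr' := hpr.lt_or_gt
      · exact ⟨p, r, q, hpr', hqr', fun x => by tauto⟩
      · exact ⟨r, p, q, hpr', hpq', fun x => by tauto⟩
  · obtain hpr' | hpr' := hpr.lt_or_gt
    · exact ⟨q, p, r, hpq', hpr', fun x => by tauto⟩
    · obtain hqr' | hqr' := hqr.lt_or_gt
      · exact ⟨q, r, p, hqr', hpr', fun x => by tauto⟩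
      · exact ⟨r, q, p, hqr', hpq', fun x => by tauto⟩

set_option maxHeartbeats 2000000 in
lemma triple_contra (d : ℕ) (hd : 2 ≤ d) (z₀ : ℂ) (hz₀ : z₀.im ≠ 0)
    (h : ∀ i j k : ℕ, i < j → j < k → k ≤ d →
      ((0 < (-1 : ℝ) ^ i * Dval d j k z₀ ∨ 0 < (-1 : ℝ) ^ (j + 1) * Dval d i k z₀ ∨
          0 < (-1 : ℝ) ^ k * Dval d i j z₀)
        ∧ ((-1 : ℝ) ^ i * Dval d j k z₀ < 0 ∨ (-1 : ℝ) ^ (j + 1) * Dval d i k z₀ < 0 ∨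
          (-1 : ℝ) ^ k * Dval d i j z₀ < 0)))
    (i j k : ℕ) (hij : i < j) (hjk : j < k) (hkd : k ≤ d)
    (u v w : ℝ) (hu : 0 ≤ u) (hv : 0 ≤ v) (hw : 0 ≤ w) (hs : 0 < u + v + w)
    (hrel : (u : ℂ) * binomC d (z₀ + d - i) + (v : ℂ) * binomC d (z₀ + d - j)
      + (w : ℂ) * binomC d (z₀ + d - k) = 0) : False := by
  set ci : ℂ := binomC d (z₀ + d - i) with hci
  set cj : ℂ := binomC d (z₀ + d - j) with hcj
  set ck : ℂ := binomC d (z₀ + d - k) with hck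
  have h0re := congrArg Complex.re hrel
  have h0im := congrArg Complex.im hrel
  simp only [Complex.add_re, Complex.add_im, Complex.mul_re, Complex.mul_im,
    Complex.ofReal_re, Complex.ofReal_im, Complex.zero_re, Complex.zero_im,
    zero_mul, sub_zero, add_zero, zero_add] at h0re h0im
  set X1 : ℝ := crossR ci cj with hX1
  set X2 : ℝ := crossR ci ck with hX2
  set X3 : ℝ := crossR cj ck with hX3
  have R1 : v * X1 + w * X2 = 0 := by
    simp only [hX1, hX2, crossR]
    linear_combination ci.re * h0im - ci.im * h0re
  have R2 : u * X1 - w * X3 = 0 := by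
    simp only [hX1, hX3, crossR]
    linear_combination cj.im * h0re - cj.re * h0im
  have R3 : u * X2 + v * X3 = 0 := by
    simp only [hX2, hX3, crossR]
    linear_combination ck.im * h0re - ck.re * h0im
  obtain ⟨s13, s23, s12⟩ := signs u v w X1 X2 X3 hu hv hw hs R1 R2 R3
  obtain ⟨q1, hq1, hD1⟩ := bridge d j k (by omega) hjk hkd z₀ hz₀
  obtain ⟨q2, hq2, hD2⟩ := bridge d i k (by omega) (hij.trans hjk) hkd z₀ hz₀
  obtain ⟨q3, hq3, hD3⟩ := bridge d i j (by omega) hij (by omega) z₀ hz₀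
  obtain ⟨hpos, hneg⟩ := h i j k hij hjk hkd
  rw [hD1, hD2, hD3] at hpos hneg
  set t : ℝ := (-1 : ℝ) ^ (i + j + k + 1) / z₀.im with ht
  have e1' : (-1 : ℝ) ^ i * (-1 : ℝ) ^ (j + k + 1) = (-1 : ℝ) ^ (i + j + k + 1) := by
    rw [← pow_add]; congr 1; omega
  have e2' : (-1 : ℝ) ^ (j + 1) * (-1 : ℝ) ^ (i + k + 1) = -(-1 : ℝ) ^ (i + j + k + 1) := by
    rw [← pow_add, show (j + 1) + (i + k + 1) = (i + j + k + 1) + 1 by omega, pow_succ]; ring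
  have e3' : (-1 : ℝ) ^ k * (-1 : ℝ) ^ (i + j + 1) = (-1 : ℝ) ^ (i + j + k + 1) := by
    rw [← pow_add]; congr 1; omega
  have p1 : (-1 : ℝ) ^ i * ((-1 : ℝ) ^ (j + k + 1) * q1 * X3 / z₀.im) = q1 * (X3 * t) := by
    rw [ht]; linear_combination (q1 * X3 / z₀.im) * e1'
  have p2 : (-1 : ℝ) ^ (j + 1) * ((-1 : ℝ) ^ (i + k + 1) * q2 * X2 / z₀.im)
      = q2 * ((-X2) * t) := by
    rw [ht]; linear_combination (q2 * X2 / z₀.im) * e2'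
  have p3 : (-1 : ℝ) ^ k * ((-1 : ℝ) ^ (i + j + 1) * q3 * X1 / z₀.im) = q3 * (X1 * t) := by
    rw [ht]; linear_combination (q3 * X1 / z₀.im) * e3'
  rw [p1, p2, p3] at hpos hneg
  rcases hpos with hp | hp | hp <;> rcases hneg with hn | hn | hn
  · exact finish_case hq1 hq1 (mul_self_nonneg X3) hp hn
  · exact finish_case hq1 hq2 (by nlinarith [s23]) hp hn
  · exact finish_case hq1 hq3 (by nlinarith [s13]) hp hn
  · exact finish_case hq2 hq1 (by nlinarith [s23]) hp hn
  · exact finish_case hq2 hq2 (mul_self_nonneg (-X2)) hp hn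
  · exact finish_case hq2 hq3 (by nlinarith [s12]) hp hn
  · exact finish_case hq3 hq1 (by nlinarith [s13]) hp hn
  · exact finish_case hq3 hq2 (by nlinarith [s12]) hp hn
  · exact finish_case hq3 hq3 (mul_self_nonneg X1) hp hn

/-- Theorem 3.3 for the binomial coefficient basis: if at every triple `i < j < k`
the three signed dual determinants take both strict signs, then `z₀` is not a root
of any nonzero polynomial with nonnegative coefficients in the binomial basis. -/
theorem stmt_9 (d : ℕ) (hd : 2 ≤ d) (z₀ : ℂ) (hz₀ : z₀.im ≠ 0)
    (h : ∀ i j k : ℕ, i < j → j < k → k ≤ d →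
      ((0 < (-1 : ℝ) ^ i * Dval d j k z₀ ∨ 0 < (-1 : ℝ) ^ (j + 1) * Dval d i k z₀ ∨
          0 < (-1 : ℝ) ^ k * Dval d i j z₀)
        ∧ ((-1 : ℝ) ^ i * Dval d j k z₀ < 0 ∨ (-1 : ℝ) ^ (j + 1) * Dval d i k z₀ < 0 ∨
          (-1 : ℝ) ^ k * Dval d i j z₀ < 0))) :
    ∀ a : Fin (d + 1) → ℝ, (∀ m, 0 ≤ a m) → (∃ m, a m ≠ 0) →
      ∑ m, (a m : ℂ) * binomC d (z₀ + d - (m : ℕ)) ≠ 0 := by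
  classical
  have key : ∀ n : ℕ, ∀ a : Fin (d + 1) → ℝ, (∀ m, 0 ≤ a m) → (∃ m, a m ≠ 0) →
      (∑ m, (a m : ℂ) * binomC d (z₀ + d - (m : ℕ)) = 0) →
      (Finset.univ.filter (fun m => a m ≠ 0)).card ≤ n → False := by
    intro n
    induction n with
    | zero =>
      intro a ha hne hsum hcard
      obtain ⟨m, hm⟩ := hne
      have hmem : m ∈ Finset.univ.filter (fun m => a m ≠ 0) := by simp [hm]
      have := Finset.card_pos.mpr ⟨m, hmem⟩
      omega
    | succ n ih =>
      intro a ha hne hsum hcard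
      set S := Finset.univ.filter (fun m => a m ≠ 0) with hSdef
      have hmemS : ∀ m : Fin (d + 1), m ∈ S ↔ a m ≠ 0 := by
        intro m; simp [hSdef]
      by_cases hS3 : S.card ≤ 3
      · -- small support: embed in a sorted triple
        have hcard3 : 3 ≤ (Finset.univ : Finset (Fin (d + 1))).card := by
          simp [Finset.card_univ]; omega
        obtain ⟨T, hST, _, hTcard⟩ :=
          Finset.exists_subsuperset_card_eq (Finset.subset_univ S) hS3 hcard3
        obtain ⟨p, q, r, hpq, hpr, hqr, hTeq⟩ := Finset.card_eq_three.mp hTcard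
        obtain ⟨i, j, k, hij, hjk, hT'⟩ := sort3 hpq hpr hqr
        have hTeq' : T = ({i, j, k} : Finset (Fin (d + 1))) := by
          rw [hTeq]; ext x; simp only [Finset.mem_insert, Finset.mem_singleton]; exact hT' x
        rw [hTeq'] at hST
        have hzero : ∀ m : Fin (d + 1), m ∉ ({i, j, k} : Finset (Fin (d + 1))) → a m = 0 := by
          intro m hm
          by_contra hma
          exact hm (hST ((hmemS m).mpr hma))
        have hsum3 : (a i : ℂ) * binomC d (z₀ + d - (i : ℕ))
            + (a j : ℂ) * binomC d (z₀ + d - (j : ℕ))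
            + (a k : ℂ) * binomC d (z₀ + d - (k : ℕ)) = 0 := by
          rw [← hsum]
          rw [← Finset.sum_subset (Finset.subset_univ ({i, j, k} : Finset (Fin (d + 1))))
            (fun x _ hx => by rw [hzero x hx]; simp)]
          rw [Finset.sum_insert (by simp [hij.ne, (hij.trans hjk).ne]),
            Finset.sum_insert (by simp [hjk.ne]), Finset.sum_singleton]
          ring
        have hspos : 0 < a i + a j + a k := by
          obtain ⟨m, hm⟩ := hne
          have hmT : m ∈ ({i, j, k} : Finset (Fin (d + 1))) := hST ((hmemS m).mpr hm)
          have ham : 0 < a m := (ha m).lt_of_ne (Ne.symm hm)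
          simp only [Finset.mem_insert, Finset.mem_singleton] at hmT
          rcases hmT with rfl | rfl | rfl
          · linarith [ha j, ha k]
          · linarith [ha i, ha k]
          · linarith [ha i, ha j]
        exact triple_contra d hd z₀ hz₀ h i j k hij hjk (by omega)
          (a i) (a j) (a k) (ha i) (ha j) (ha k) hspos hsum3
      · -- large support: reduce
        push_neg at hS3
        obtain ⟨T, hTS, hTcard⟩ := Finset.exists_subset_card_eq (show 3 ≤ S.card by omega)
        obtain ⟨p, q, r, hpq, hpr, hqr, hTeq⟩ := Finset.card_eq_three.mp hTcard
        set cp : ℂ := binomC d (z₀ + d - ((p : Fin (d+1)) : ℕ)) with hcp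
        set cq : ℂ := binomC d (z₀ + d - ((q : Fin (d+1)) : ℕ)) with hcq
        set cr : ℂ := binomC d (z₀ + d - ((r : Fin (d+1)) : ℕ)) with hcr
        have hdep : ∃ α β γ : ℝ, (α ≠ 0 ∨ β ≠ 0 ∨ γ ≠ 0) ∧
            (α : ℂ) * cp + (β : ℂ) * cq + (γ : ℂ) * cr = 0 := by
          by_cases hx : crossR cp cq = 0
          · by_cases hp0 : cp = 0
            · exact ⟨1, 0, 0, Or.inl one_ne_zero, by simp [hp0]⟩
            · obtain ⟨ρ, hρ⟩ := collinear_dep hx hp0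
              exact ⟨ρ, -1, 0, Or.inr (Or.inl (by norm_num)), by
                push_cast
                rw [show (ρ:ℂ) * cp + (-1:ℂ) * cq + 0 * cr = (ρ:ℂ) * cp - cq by ring, hρ]⟩
          · refine ⟨crossR cq cr, -crossR cp cr, crossR cp cq, Or.inr (Or.inr hx), ?_⟩
            push_cast
            linear_combination cramer cp cq cr
        obtain ⟨α, β, γ, hαβγ, hdep0⟩ := hdep
        -- build μ
        set μ : Fin (d + 1) → ℝ := fun m =>
          if m = p then α else if m = q then β else if m = r then γ else 0 with hμdef
        have hμp : μ p = α := by simp [hμdef]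
        have hμq : μ q = β := by simp [hμdef, hpq.symm]
        have hμr : μ r = γ := by simp [hμdef, hpr.symm, hqr.symm]
        have hμzero : ∀ m, m ∉ ({p, q, r} : Finset (Fin (d + 1))) → μ m = 0 := by
          intro m hm
          simp only [Finset.mem_insert, Finset.mem_singleton, not_or] at hm
          simp [hμdef, hm.1, hm.2.1, hm.2.2]
        have hμsupp : ∀ m, μ m ≠ 0 → a m ≠ 0 := by
          intro m hm
          by_contra hma
          have hmS : m ∈ S := by
            by_contra hmS
            exact hm (hμzero m (fun hmem => hmS (hTS (by rw [hTeq]; exact hmem))))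
          exact ((hmemS m).mp hmS) hma
        have hμsum : ∑ m, (μ m : ℂ) * binomC d (z₀ + d - (m : ℕ)) = 0 := by
          rw [← Finset.sum_subset (Finset.subset_univ ({p, q, r} : Finset (Fin (d + 1))))
            (fun x _ hx => by rw [hμzero x hx]; simp)]
          have hpqr : p ∉ ({q, r} : Finset (Fin (d+1))) := by simp [hpq, hpr]
          have hqr' : q ∉ ({r} : Finset (Fin (d+1))) := by simp [hqr]
          rw [Finset.sum_insert hpqr, Finset.sum_insert hqr', Finset.sum_singleton,
            hμp, hμq, hμr]
          rw [← hcp, ← hcq, ← hcr]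
          linear_combination hdep0
        -- find a positive entry of μ (possibly after negation)
        have hredex : ∃ t : ℝ, (∀ m, 0 ≤ a m - t * μ m) ∧
            (∃ m₀, a m₀ ≠ 0 ∧ a m₀ - t * μ m₀ = 0) ∧
            (∑ m, ((a m - t * μ m : ℝ) : ℂ) * binomC d (z₀ + d - (m : ℕ)) = 0) := by
          have hsum' : ∀ t : ℝ, ∑ m, ((a m - t * μ m : ℝ) : ℂ) * binomC d (z₀ + d - (m : ℕ)) = 0 := by
            intro t
            have : ∑ m, ((a m - t * μ m : ℝ) : ℂ) * binomC d (z₀ + d - (m : ℕ))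
                = ∑ m, ((a m : ℂ) * binomC d (z₀ + d - (m : ℕ))
                  - (t : ℂ) * ((μ m : ℂ) * binomC d (z₀ + d - (m : ℕ)))) := by
              refine Finset.sum_congr rfl fun m _ => ?_
              push_cast
              ring
            rw [this, Finset.sum_sub_distrib, ← Finset.mul_sum, hμsum, hsum]
            ring
          have hμ1 : ∃ m₁, μ m₁ ≠ 0 := by
            rcases hαβγ with h' | h' | h'
            exacts [⟨p, by rwa [hμp]⟩, ⟨q, by rwa [hμq]⟩, ⟨r, by rwa [hμr]⟩]
          obtain ⟨m₁, hm₁⟩ := hμ1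
          rcases hm₁.lt_or_gt with hneg | hpos
          · obtain ⟨t, _, h1, h2⟩ := reduce a (fun m => -μ m) ha
              (fun m hm => hμsupp m (by simpa using hm)) m₁ (by simpa using hneg)
            refine ⟨-t, fun m => by simpa using h1 m, ?_, ?_⟩
            · obtain ⟨m₀, hm₀⟩ := h2
              exact ⟨m₀, hm₀.1, by linarith [hm₀.2]⟩
            · exact hsum' (-t)
          · obtain ⟨t, _, h1, h2⟩ := reduce a μ ha hμsupp m₁ hpos
            exact ⟨t, h1, h2, hsum' t⟩
        obtain ⟨t, h1, ⟨m₀, hm₀a, hm₀z⟩, hsum''⟩ := hredex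
        set a' : Fin (d + 1) → ℝ := fun m => a m - t * μ m with ha'def
        have ha'supp : (Finset.univ.filter (fun m => a' m ≠ 0)) ⊆ S.erase m₀ := by
          intro m hm
          simp only [Finset.mem_filter, Finset.mem_univ, true_and] at hm
          rw [Finset.mem_erase]
          constructor
          · rintro rfl
            exact hm hm₀z
          · rw [hmemS]
            intro hma
            apply hm
            have hμm : μ m = 0 := by
              by_contra hμm
              exact (hμsupp m hμm) hma
            simp [ha'def, hma, hμm]
        have ha'ne : ∃ m, a' m ≠ 0 := by
          have : ¬ S ⊆ ({p, q, r} : Finset (Fin (d + 1))) := by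
            intro hsub
            have := Finset.card_le_card hsub
            have : ({p, q, r} : Finset (Fin (d + 1))).card ≤ 3 := by
              rw [← hTeq, hTcard]
            omega
          obtain ⟨m, hmS, hmT⟩ := Finset.not_subset.mp this
          refine ⟨m, ?_⟩
          have hμm : μ m = 0 := hμzero m hmT
          simp [ha'def, hμm]
          exact (hmemS m).mp hmS
        have ha'card : (Finset.univ.filter (fun m => a' m ≠ 0)).card ≤ n := by
          have h1' := Finset.card_le_card ha'supp
          have h2' : (S.erase m₀).card = S.card - 1 := by
            apply Finset.card_erase_of_mem
            exact (hmemS m₀).mpr hm₀a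
          omega
        exact ih a' (fun m => h1 m) ha'ne hsum'' ha'card
  intro a ha hne hsum
  exact key (Finset.univ.filter (fun m => a m ≠ 0)).card a ha hne hsum le_rfl
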